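/- The quartic form G(x,y,z) = x^4 + y^4 + z^4 - (x^2 y^2 + x^2 z^2 + y^2 z^2) - xyz(x+y+z) over Q_2 has only the trivial zero, i.e., if G(x,y,z) = 0 with x, y, z in Q_2 then x = y = z = 0. -/

import Mathlib

lemma terj_unit (b c : ℤ_[2]) :
    (1 : ℤ_[2]) + b ^ 4 + c ^ 4 - (b ^ 2 + c ^ 2 + b ^ 2 * c ^ 2)
      - b * c * (1 + b + c) ≠ 0 := by
  intro h
  have h2 := congrArg PadicInt.toZMod h
  simp only [map_add, map_sub, map_mul, map_pow, map_one, map_zero] at h2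
  generalize PadicInt.toZMod b = B at h2
  generalize PadicInt.toZMod c = C at h2
  revert h2
  revert B C
  decide

lemma terj_max (x y z : ℚ_[2])
    (h : x ^ 4 + y ^ 4 + z ^ 4 - (x ^ 2 * y ^ 2 + x ^ 2 * z ^ 2 + y ^ 2 * z ^ 2)
        - x * y * z * (x + y + z) = 0)
    (hy : ‖y‖ ≤ ‖x‖) (hz : ‖z‖ ≤ ‖x‖) : x = 0 := by
  by_contra hx
  have hx0 : (0:ℝ) < ‖x‖ := norm_pos_iff.mpr hx
  obtain ⟨u, rfl⟩ : ∃ u, y = u * x := ⟨y / x, (div_mul_cancel₀ y hx).symm⟩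
  obtain ⟨v, rfl⟩ : ∃ v, z = v * x := ⟨z / x, (div_mul_cancel₀ z hx).symm⟩
  rw [norm_mul] at hy hz
  have hu1 : ‖u‖ ≤ 1 := (mul_le_iff_le_one_left hx0).mp hy
  have hv1 : ‖v‖ ≤ 1 := (mul_le_iff_le_one_left hx0).mp hz
  set b : ℤ_[2] := ⟨u, hu1⟩
  set c : ℤ_[2] := ⟨v, hv1⟩
  apply terj_unit b c
  have hP : x ^ 4 * ((1:ℚ_[2]) + u ^ 4 + v ^ 4 - (u ^ 2 + v ^ 2 + u ^ 2 * v ^ 2)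
      - u * v * (1 + u + v)) = 0 := by linear_combination h
  have hP0 := (mul_eq_zero.mp hP).resolve_left (pow_ne_zero 4 hx)
  have key : ((1 + b ^ 4 + c ^ 4 - (b ^ 2 + c ^ 2 + b ^ 2 * c ^ 2)
      - b * c * (1 + b + c) : ℤ_[2]) : ℚ_[2]) = 0 := by
    push_cast
    exact hP0
  exact PadicInt.coe_eq_zero.mp key

theorem terjanian_G_only_trivial_zero (x y z : ℚ_[2])
    (h : x ^ 4 + y ^ 4 + z ^ 4 - (x ^ 2 * y ^ 2 + x ^ 2 * z ^ 2 + y ^ 2 * z ^ 2)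
        - x * y * z * (x + y + z) = 0) :
    x = 0 ∧ y = 0 ∧ z = 0 := by
  have hy : y ^ 4 + x ^ 4 + z ^ 4 - (y ^ 2 * x ^ 2 + y ^ 2 * z ^ 2 + x ^ 2 * z ^ 2)
      - y * x * z * (y + x + z) = 0 := by linear_combination h
  have hz : z ^ 4 + y ^ 4 + x ^ 4 - (z ^ 2 * y ^ 2 + z ^ 2 * x ^ 2 + y ^ 2 * x ^ 2)
      - z * y * x * (z + y + x) = 0 := by linear_combination h
  rcases le_total ‖x‖ ‖y‖ with h1 | h1
  · rcases le_total ‖y‖ ‖z‖ with h2 | h2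
    · -- z max
      have hz0 : z = 0 := terj_max z y x hz h2 (h1.trans h2)
      subst hz0
      have hy0 : y = 0 := terj_max y x 0 (by linear_combination h) h1 (by simp)
      subst hy0
      have : x ^ 4 = 0 := by linear_combination h
      exact ⟨by exact pow_eq_zero_iff (by norm_num) |>.mp this, rfl, rfl⟩
    · -- y max
      have hy0 : y = 0 := terj_max y x z hy h1 h2
      subst hy0
      have hx0 : x = 0 := norm_le_zero_iff.mp (by simpa using h1)
      subst hx0
      have : z ^ 4 = 0 := by linear_combination h
      exact ⟨rfl, rfl, pow_eq_zero_iff (by norm_num) |>.mp this⟩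
  · rcases le_total ‖x‖ ‖z‖ with h2 | h2
    · -- z max
      have hz0 : z = 0 := terj_max z y x hz (h1.trans h2) h2
      subst hz0
      have hx0 : x = 0 := terj_max x y 0 (by linear_combination h) h1 (by simp)
      subst hx0
      have : y ^ 4 = 0 := by linear_combination h
      exact ⟨rfl, pow_eq_zero_iff (by norm_num) |>.mp this, rfl⟩
    · -- x max
      have hx0 : x = 0 := terj_max x y z h h1 h2
      subst hx0
      have hy0 : y = 0 := norm_le_zero_iff.mp (by simpa using h1)
      subst hy0
      have : z ^ 4 = 0 := by linear_combination h
      exact ⟨rfl, rfl, pow_eq_zero_iff (by norm_num) |>.mp this⟩
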